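/- arXiv:1810.08058 — 4 statements merged into one kernel-verified Lean document; each statement's English description precedes it below -/
import Mathlib

section
/- Let ω be a symplectic (nondegenerate alternating bilinear) form on ℝ^{2n} and let (e_1, …, e_{2n}) be a basis of ℝ^{2n}. Then there exists a permutation σ of {1, …, 2n} such that ω(e_{σ(2k−1)}, e_{σ(2k)}) ≠ 0 for every k = 1, …, n. -/
open Matrix in

theorem matching_of_skew (m : ℕ) : ∀ (ι : Type) (_ : Fintype ι) (_ : DecidableEq ι),
    Fintype.card ι = 2*m → ∀ (M : Matrix ι ι ℝ), (∀ i j, M j i = - M i j) →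
    M.det ≠ 0 → ∃ a b : Fin m → ι,
      (∀ k, M (a k) (b k) ≠ 0) ∧ (∀ k l, a k = a l → k = l) ∧
      (∀ k l, b k = b l → k = l) ∧ (∀ k l, a k ≠ b l) := by
  induction m with
  | zero =>
    intro ι _ _ _ M _ _
    exact ⟨Fin.elim0, Fin.elim0, fun k => k.elim0, fun k => k.elim0,
      fun k => k.elim0, fun k => k.elim0⟩
  | succ m ih =>
    intro ι instF instD hcard M hskew hdet
    have hM00 : ∀ i, M i i = 0 := fun i => by have := hskew i i; linarith
    have hne : Nonempty ι := Fintype.card_pos_iff.mp (by omega)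
    obtain ⟨i₀⟩ := hne
    set N := M⁻¹ with hNdef
    have hdet' : IsUnit M.det := isUnit_iff_ne_zero.mpr hdet
    have hMN : M * N = 1 := Matrix.mul_nonsing_inv M hdet'
    have hMT : Mᵀ = -M := by
      ext i j
      simp only [Matrix.transpose_apply, Matrix.neg_apply]
      exact hskew i j
    have hNeg : (-M)⁻¹ = -N := Matrix.inv_eq_right_inv (by rw [neg_mul_neg, hMN])
    have hNT : Nᵀ = -N := by
      rw [hNdef, Matrix.transpose_nonsing_inv, hMT, hNeg]
    have hNskew : ∀ i j, N j i = - N i j := by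
      intro i j
      have := congrFun (congrFun hNT i) j
      simpa [Matrix.transpose_apply] using this
    have hN00 : ∀ i, N i i = 0 := fun i => by have := hNskew i i; linarith
    have key : ∑ j, M i₀ j * N i₀ j = -1 := by
      have h1 : (M * N) i₀ i₀ = 1 := by rw [hMN]; simp [Matrix.one_apply]
      rw [Matrix.mul_apply] at h1
      have h2 : ∑ j, M i₀ j * N i₀ j = - ∑ j, M i₀ j * N j i₀ := by
        rw [← Finset.sum_neg_distrib]
        exact Finset.sum_congr rfl fun j _ => by rw [hNskew]; ring
      rw [h2, h1]
    have hexj : ∃ j, M i₀ j ≠ 0 ∧ N i₀ j ≠ 0 := by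
      by_contra h
      push_neg at h
      have h0 : ∑ j, M i₀ j * N i₀ j = 0 := Finset.sum_eq_zero fun j _ => by
        by_cases hj : M i₀ j = 0
        · rw [hj, zero_mul]
        · rw [h j hj, mul_zero]
      rw [h0] at key; norm_num at key
    obtain ⟨j₀, hMij, hNij⟩ := hexj
    have hij : i₀ ≠ j₀ := by rintro rfl; exact hMij (hM00 i₀)
    classical
    let κ := {x : ι // x ≠ i₀ ∧ x ≠ j₀}
    let g : Fin 2 ⊕ κ → ι := Sum.elim ![i₀, j₀] Subtype.val
    have hginj : Function.Injective g := by
      rintro (x | x) (y | y) hxy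
      · fin_cases x <;> fin_cases y
        all_goals simp only [g, Sum.elim_inl, Matrix.cons_val_zero, Matrix.cons_val_one,
          Matrix.head_cons] at hxy
        · rfl
        · exact absurd hxy hij
        · exact absurd hxy.symm hij
        · rfl
      · fin_cases x <;> simp only [g, Sum.elim_inl, Sum.elim_inr] at hxy
        · exact absurd hxy.symm y.2.1
        · exact absurd hxy.symm y.2.2
      · fin_cases y <;> simp only [g, Sum.elim_inl, Sum.elim_inr] at hxy
        · exact absurd hxy x.2.1
        · exact absurd hxy x.2.2
      · exact congrArg Sum.inr (Subtype.ext hxy)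
    have hgsurj : Function.Surjective g := by
      intro x
      by_cases h1 : x = i₀
      · exact ⟨Sum.inl 0, by simp [g, h1]⟩
      by_cases h2 : x = j₀
      · exact ⟨Sum.inl 1, by simp [g, h2]⟩
      · exact ⟨Sum.inr ⟨x, h1, h2⟩, rfl⟩
    let E : (Fin 2 ⊕ κ) ≃ ι := Equiv.ofBijective g ⟨hginj, hgsurj⟩
    have hκ : Fintype.card κ = 2 * m := by
      have := Fintype.card_congr E
      simp [Fintype.card_sum] at this
      omega
    set M' := M.submatrix E E with hM'def
    set N' := N.submatrix E E with hN'def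
    have hM'N' : M' * N' = 1 := by
      rw [hM'def, hN'def, Matrix.submatrix_mul_equiv, hMN, Matrix.submatrix_one_equiv]
    have hblocks := hM'N'
    rw [← Matrix.fromBlocks_toBlocks M', ← Matrix.fromBlocks_toBlocks N',
      Matrix.fromBlocks_multiply, ← Matrix.fromBlocks_one] at hblocks
    have h11 := congrArg Matrix.toBlocks₁₁ hblocks
    have h21 := congrArg Matrix.toBlocks₂₁ hblocks
    simp only [Matrix.toBlocks_fromBlocks₁₁, Matrix.toBlocks_fromBlocks₂₁] at h11 h21
    have hprod : M' * Matrix.fromBlocks (N'.toBlocks₁₁) 0 (N'.toBlocks₂₁) 1 =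
        Matrix.fromBlocks 1 (M'.toBlocks₁₂) 0 (M'.toBlocks₂₂) := by
      conv_lhs => rw [← Matrix.fromBlocks_toBlocks M']
      rw [Matrix.fromBlocks_multiply, h11, h21]
      simp
    have hE0 : E (Sum.inl 0) = i₀ := rfl
    have hE1 : E (Sum.inl 1) = j₀ := rfl
    have hdetP : (N'.toBlocks₁₁).det ≠ 0 := by
      have hd : (N'.toBlocks₁₁).det = N i₀ j₀ * N i₀ j₀ := by
        rw [Matrix.det_fin_two]
        simp only [Matrix.toBlocks₁₁, Matrix.of_apply, hN'def, Matrix.submatrix_apply,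
          hE0, hE1, hN00, hNskew i₀ j₀]
        ring
      rw [hd]
      exact mul_ne_zero hNij hNij
    have hdetD : (M'.toBlocks₂₂).det ≠ 0 := by
      have h1 := congrArg Matrix.det hprod
      rw [Matrix.det_mul, Matrix.det_fromBlocks_zero₁₂, Matrix.det_fromBlocks_zero₂₁,
        Matrix.det_one, Matrix.det_one, mul_one, one_mul] at h1
      have hdM' : M'.det ≠ 0 := by
        rw [hM'def, Matrix.det_submatrix_equiv_self]; exact hdet
      rw [← h1]
      exact mul_ne_zero hdM' hdetP
    have hDskew : ∀ (x y : κ), (M'.toBlocks₂₂) y x = - (M'.toBlocks₂₂) x y := by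
      intro x y
      simp only [Matrix.toBlocks₂₂, Matrix.of_apply, hM'def, Matrix.submatrix_apply]
      exact hskew _ _
    obtain ⟨a, b, hab, ha, hb, hanb⟩ :=
      ih κ inferInstance inferInstance hκ (M'.toBlocks₂₂) hDskew hdetD
    have habM : ∀ k, M (a k).val (b k).val ≠ 0 := by
      intro k
      have := hab k
      exact this
    refine ⟨Fin.cases i₀ (fun k => (a k).val), Fin.cases j₀ (fun k => (b k).val), ?_, ?_, ?_, ?_⟩
    · intro k
      cases k using Fin.cases with
      | zero => simpa using hMij
      | succ k => simpa using habM k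
    · intro k l h
      cases k using Fin.cases with
      | zero =>
        cases l using Fin.cases with
        | zero => rfl
        | succ l => simp only [Fin.cases_zero, Fin.cases_succ] at h
                    exact absurd h.symm (a l).2.1
      | succ k =>
        cases l using Fin.cases with
        | zero => simp only [Fin.cases_zero, Fin.cases_succ] at h
                  exact absurd h (a k).2.1
        | succ l =>
          simp only [Fin.cases_succ] at h
          exact congrArg Fin.succ (ha k l (Subtype.ext h))
    · intro k l h
      cases k using Fin.cases with
      | zero =>
        cases l using Fin.cases with
        | zero => rfl
        | succ l => simp only [Fin.cases_zero, Fin.cases_succ] at h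
                    exact absurd h.symm (b l).2.2
      | succ k =>
        cases l using Fin.cases with
        | zero => simp only [Fin.cases_zero, Fin.cases_succ] at h
                  exact absurd h (b k).2.2
        | succ l =>
          simp only [Fin.cases_succ] at h
          exact congrArg Fin.succ (hb k l (Subtype.ext h))
    · intro k l h
      cases k using Fin.cases with
      | zero =>
        cases l using Fin.cases with
        | zero => exact hij (by simpa using h)
        | succ l => simp only [Fin.cases_zero, Fin.cases_succ] at h
                    exact (b l).2.1 h.symm
      | succ k =>
        cases l using Fin.cases with
        | zero => simp only [Fin.cases_zero, Fin.cases_succ] at h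
                  exact (a k).2.2 h
        | succ l =>
          simp only [Fin.cases_succ] at h
          exact hanb k l (Subtype.ext h)

theorem stmt_0 (n : ℕ) (hn : 0 < n)
    (ω : (Fin (2*n) → ℝ) →ₗ[ℝ] (Fin (2*n) → ℝ) →ₗ[ℝ] ℝ)
    (halt : ∀ v, ω v v = 0)
    (hnd : ∀ v, v ≠ 0 → ∃ w, ω v w ≠ 0)
    (e : Module.Basis (Fin (2*n)) ℝ (Fin (2*n) → ℝ)) :
    ∃ σ : Equiv.Perm (Fin (2*n)),
      ∀ k : Fin n,
        ω (e (σ ⟨2*k.val, by have := k.2; omega⟩))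
          (e (σ ⟨2*k.val+1, by have := k.2; omega⟩)) ≠ 0 := by
  classical
  set M : Matrix (Fin (2*n)) (Fin (2*n)) ℝ := Matrix.of fun i j => ω (e i) (e j) with hMdef
  have hskew0 : ∀ u v, ω u v = - ω v u := by
    intro u v
    have h := halt (u + v)
    simp only [map_add, LinearMap.add_apply, halt u, halt v] at h
    linarith
  have hskewM : ∀ i j, M j i = - M i j := fun i j => hskew0 (e j) (e i)
  have hdetM : M.det ≠ 0 := by
    intro h0
    obtain ⟨v, hv, hvM⟩ := Matrix.exists_vecMul_eq_zero_iff.mpr h0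
    set u := e.equivFun.symm v with hudef
    have hu : u ≠ 0 := fun h => hv (by
      rwa [hudef, LinearEquiv.map_eq_zero_iff] at h)
    have hωu : ∀ j, ω u (e j) = 0 := by
      intro j
      have h1 : ω u (e j) = ∑ i, v i * M i j := by
        rw [hudef, Module.Basis.equivFun_symm_apply, map_sum]
        simp [LinearMap.sum_apply, map_smul, LinearMap.smul_apply, smul_eq_mul, hMdef]
      have h2 : ∑ i, v i * M i j = 0 := by
        have := congrFun hvM j
        rwa [Matrix.vecMul, dotProduct] at this
      rw [h1, h2]
    obtain ⟨w, hw⟩ := hnd u hu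
    apply hw
    have : ω u w = ω u (∑ j, e.repr w j • e j) := by rw [Module.Basis.sum_repr]
    rw [this, map_sum]
    exact Finset.sum_eq_zero fun j _ => by rw [map_smul, smul_eq_mul, hωu, mul_zero]
  obtain ⟨a, b, hab, ha, hb, hanb⟩ := matching_of_skew n (Fin (2*n)) inferInstance inferInstance
    (by simp) M hskewM hdetM
  let f : Fin (2*n) → Fin (2*n) := fun i =>
    if h : i.val % 2 = 0 then a ⟨i.val / 2, by omega⟩ else b ⟨i.val / 2, by omega⟩
  have hfinj : Function.Injective f := by
    intro i j h
    simp only [f] at h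
    by_cases hi : i.val % 2 = 0 <;> by_cases hj : j.val % 2 = 0
    · rw [dif_pos hi, dif_pos hj] at h
      have := ha _ _ h
      rw [Fin.mk.injEq] at this
      exact Fin.ext (by omega)
    · rw [dif_pos hi, dif_neg hj] at h
      exact absurd h (hanb _ _)
    · rw [dif_neg hi, dif_pos hj] at h
      exact absurd h.symm (hanb _ _)
    · rw [dif_neg hi, dif_neg hj] at h
      have := hb _ _ h
      rw [Fin.mk.injEq] at this
      exact Fin.ext (by omega)
  refine ⟨Equiv.ofBijective f (Finite.injective_iff_bijective.mp hfinj), ?_⟩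
  intro k
  have h1 : Equiv.ofBijective f (Finite.injective_iff_bijective.mp hfinj)
      ⟨2*k.val, by have := k.2; omega⟩ = a k := by
    simp only [Equiv.ofBijective_apply, f]
    rw [dif_pos (by omega)]
    congr 1
    exact Fin.ext (show (2*k.val)/2 = k.val by omega)
  have h2 : Equiv.ofBijective f (Finite.injective_iff_bijective.mp hfinj)
      ⟨2*k.val+1, by have := k.2; omega⟩ = b k := by
    simp only [Equiv.ofBijective_apply, f]
    rw [dif_neg (by omega)]
    congr 1
    exact Fin.ext (show (2*k.val+1)/2 = k.val by omega)
  rw [h1, h2]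
  exact hab k
end

section
/- Let F be a symmetric bilinear form on a finite-dimensional 𝔽₂-vector space V of dimension b, with matrix (F_{ij}) in some basis. Then the determinant of this matrix over 𝔽₂ equals Σ Π_{j=1}^{q} F(P_j), where the sum is over all partitions P_1 ∪ ⋯ ∪ P_q = {1,…,b} into subsets of size one or two, with the convention F({i}) = F_{ii} and F({i,j}) = F_{ij}. -/
/-- Milnor's formula over `𝔽₂`: the determinant of the matrix of a symmetric bilinear
form equals the sum over partitions of `{1,…,b}` into one- and two-element subsets of the
products `∏ⱼ F(Pⱼ)`.  Such partitions correspond exactly to involutions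
`σ : Perm (Fin b)` (the two-element blocks being the `2`-cycles of `σ`), and over `𝔽₂`
(where `x^2 = x`) the product `∏ⱼ F(Pⱼ)` equals `∏ i, F (e i) (e (σ i))`. -/
theorem stmt_2 (b : ℕ) (Vec : Type*) [AddCommGroup Vec] [Module (ZMod 2) Vec]
    (F : LinearMap.BilinForm (ZMod 2) Vec)
    (hsym : ∀ x y, F x y = F y x)
    (e : Module.Basis (Fin b) (ZMod 2) Vec) :
    (Matrix.of fun i j => F (e i) (e j)).det =
      ∑ σ ∈ Finset.univ.filter (fun σ : Equiv.Perm (Fin b) => σ * σ = 1),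
        ∏ i, F (e i) (e (σ i)) := by
  classical
  set f : Equiv.Perm (Fin b) → ZMod 2 := fun σ => ∏ i, F (e i) (e (σ i)) with hf
  have hsign : ∀ σ : Equiv.Perm (Fin b), ((Equiv.Perm.sign σ : ℤ) : ZMod 2) = 1 := by
    intro σ
    rcases Int.units_eq_one_or (Equiv.Perm.sign σ) with h | h <;> simp [h] <;> decide
  have hdet : (Matrix.of fun i j => F (e i) (e j)).det = ∑ σ : Equiv.Perm (Fin b), f σ := by
    rw [Matrix.det_apply]
    refine Finset.sum_congr rfl fun σ _ => ?_
    have : (Equiv.Perm.sign σ : ℤ) • ∏ i, (Matrix.of fun i j => F (e i) (e j)) (σ i) i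
        = ((Equiv.Perm.sign σ : ℤ) : ZMod 2) * ∏ i, F (e (σ i)) (e i) := by
      simp [zsmul_eq_mul]
    rw [Units.smul_def, this, hsign, one_mul, hf]
    exact Finset.prod_congr rfl fun i _ => hsym _ _
  have hfinv : ∀ σ : Equiv.Perm (Fin b), f σ⁻¹ = f σ := by
    intro σ
    simp only [hf]
    rw [← Equiv.prod_comp σ (fun i => F (e i) (e (σ⁻¹ i)))]
    simp only [Equiv.Perm.inv_def, Equiv.symm_apply_apply]
    exact Finset.prod_congr rfl fun i _ => hsym _ _
  rw [hdet, ← Finset.sum_filter_add_sum_filter_not Finset.univ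
    (fun σ : Equiv.Perm (Fin b) => σ * σ = 1) f]
  have hzero : ∑ σ ∈ Finset.univ.filter
      (fun σ : Equiv.Perm (Fin b) => ¬ σ * σ = 1), f σ = 0 := by
    refine Finset.sum_involution (fun σ _ => σ⁻¹) ?_ ?_ ?_ ?_
    · intro σ hσ
      rw [hfinv]
      exact CharTwo.add_self_eq_zero _
    · intro σ hσ _
      intro h
      simp only [Finset.mem_filter] at hσ
      exact hσ.2 (inv_eq_iff_mul_eq_one.mp h)
    · intro σ hσ
      simp only [Finset.mem_filter, Finset.mem_univ, true_and] at hσ ⊢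
      intro h
      exact hσ (by simpa using congrArg Inv.inv h)
    · intro σ _
      simp
  rw [hzero, add_zero]
end

section
/- Let Γ be a finite connected metric graph with first Betti number b ≥ 2 (so b = |E| − |V| + 1), edge lengths ℓ : E → ℝ_{>0}, and total length ℓ(Γ). Assuming the Bollobás–Szemerédi–Thomason systolic inequality (there exists a cycle of length at most 4·(log₂ b)/(b−1)·ℓ(Γ) which is nontrivial in H₁(Γ; ℤ₂)), there exist cycles γ_1, …, γ_b forming a ℤ₂-homology basis of Γ with Π_{k=1}^{b} ℓ(γ_k) ≤ (4^{b−1}/(b−1)!) · (Π_{k=2}^{b} log₂ k) · ℓ(Γ)^b. -/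
set_option linter.unusedSectionVars false

open Finset

/-- The `ℤ₂`-chain of a closed walk: the indicator function of its edge set,
viewed as an element of the edge space `Sym2 V → ℤ₂`. -/
def walkChain {V : Type*} [DecidableEq V] {G : SimpleGraph V} {v : V}
    (w : G.Walk v v) : Sym2 V → ZMod 2 :=
  fun e => if e ∈ w.edges then 1 else 0

/-- The cycle space `H₁(Γ; ℤ₂)` of a graph: the span of the chains of its cycles. -/
def cycleSpace {V : Type*} [DecidableEq V] (G : SimpleGraph V) :
    Submodule (ZMod 2) (Sym2 V → ZMod 2) :=
  Submodule.span (ZMod 2)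
    {x | ∃ (v : V) (w : G.Walk v v), w.IsCycle ∧ x = walkChain w}

/-- The length of a cycle: the sum of the lengths of its edges. -/
noncomputable def walkLen {V : Type*} [DecidableEq V] {G : SimpleGraph V} {v : V}
    (ℓ : Sym2 V → ℝ) (w : G.Walk v v) : ℝ :=
  ∑ e ∈ w.edges.toFinset, ℓ e

namespace SystolicAux

open SimpleGraph

variable {V : Type*} [DecidableEq V] {G : SimpleGraph V}

/-- The mod-2 count chain of a walk. -/
def cChain {u v : V} (w : G.Walk u v) : Sym2 V → ZMod 2 :=
  fun e => (w.edges.count e : ZMod 2)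

lemma cChain_append {u v x : V} (p : G.Walk u v) (q : G.Walk v x) :
    cChain (p.append q) = cChain p + cChain q := by
  funext e
  simp [cChain, SimpleGraph.Walk.edges_append, List.count_append]

lemma cChain_eq_of_perm {u v u' v' : V} {p : G.Walk u v} {q : G.Walk u' v'}
    (h : p.edges.Perm q.edges) : cChain p = cChain q := by
  funext e; simp [cChain, h.count_eq]

lemma cChain_transfer {u v : V} {H : SimpleGraph V} (w : G.Walk u v) (h) :
    cChain (w.transfer H h) = cChain w := by
  funext e; simp [cChain, SimpleGraph.Walk.edges_transfer]

lemma walkChain_transfer {u : V} {H : SimpleGraph V} (w : G.Walk u u) (h) :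
    walkChain (w.transfer H h) = walkChain w := by
  funext e; simp [walkChain, SimpleGraph.Walk.edges_transfer]

lemma walkLen_transfer (ℓ : Sym2 V → ℝ) {u : V} {H : SimpleGraph V} (w : G.Walk u u) (h) :
    walkLen ℓ (w.transfer H h) = walkLen ℓ w := by
  simp [walkLen, SimpleGraph.Walk.edges_transfer]

lemma walkChain_eq_cChain {u : V} {w : G.Walk u u} (h : w.edges.Nodup) :
    walkChain w = cChain w := by
  funext e
  by_cases he : e ∈ w.edges
  · simp [walkChain, cChain, he, List.count_eq_one_of_mem h he]
  · simp [walkChain, cChain, he, List.count_eq_zero_of_not_mem he]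

lemma isPath_loop_eq_nil {u : V} (p : G.Walk u u) (hp : p.IsPath) : p = SimpleGraph.Walk.nil := by
  cases p with
  | nil => rfl
  | cons h t =>
    exfalso
    have hnd := hp.support_nodup
    rw [SimpleGraph.Walk.support_cons, List.nodup_cons] at hnd
    exact hnd.1 t.end_mem_support

lemma last_edge {x : V} {a : V} (p : G.Walk a x) (hp : p.IsPath) (e : Sym2 V)
    (he : e ∈ p.edges) (hx : x ∈ e) :
    ∃ (y : V) (q : G.Walk a y) (h : G.Adj y x),
      p = q.append (SimpleGraph.Walk.cons h SimpleGraph.Walk.nil) ∧ e = s(y, x) := by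
  induction p with
  | nil => simp at he
  | @cons a c _ hadj t ih =>
    rw [SimpleGraph.Walk.edges_cons, List.mem_cons] at he
    rcases he with rfl | het
    · rcases Sym2.mem_iff.mp hx with rfl | rfl
      · exfalso
        have hnd := hp.support_nodup
        rw [SimpleGraph.Walk.support_cons, List.nodup_cons] at hnd
        exact hnd.1 t.end_mem_support
      · have ht : t = SimpleGraph.Walk.nil := isPath_loop_eq_nil t hp.of_cons
        subst ht
        exact ⟨a, SimpleGraph.Walk.nil, hadj, rfl, rfl⟩
    · obtain ⟨y, q, h, hteq, hey⟩ := ih hp.of_cons het hx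
      subst hteq
      exact ⟨y, SimpleGraph.Walk.cons hadj q, h, by rw [SimpleGraph.Walk.cons_append], hey⟩

end SystolicAux
-- continuation lemmas, to be appended inside namespace
namespace SystolicAux
open SimpleGraph
variable {V : Type*} [DecidableEq V] {G : SimpleGraph V}

lemma cChain_backtrack {u y : V} (hadj : G.Adj u y) (h' : G.Adj y u) :
    cChain (SimpleGraph.Walk.cons hadj (SimpleGraph.Walk.cons h' SimpleGraph.Walk.nil)) = 0 := by
  funext f
  have hedges : (SimpleGraph.Walk.cons hadj
      (SimpleGraph.Walk.cons h' SimpleGraph.Walk.nil)).edges = [s(u, y), s(y, u)] := by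
    simp
  rw [cChain]
  simp only [hedges]
  rcases eq_or_ne f s(u, y) with rfl | hne
  · have h2 : List.count s(u, y) [s(u, y), s(y, u)] = 2 := by
      rw [Sym2.eq_swap]
      simp [List.count_cons]
    rw [h2]
    exact_mod_cast ZMod.natCast_self 2
  · have hne' : f ≠ s(y, u) := by rw [Sym2.eq_swap]; exact hne
    have h0 : List.count f [s(u, y), s(y, u)] = 0 :=
      List.count_eq_zero_of_not_mem (by simp [hne, hne'])
    rw [h0]
    simp

lemma cChain_mem_cycleSpace : ∀ (n : ℕ) {u : V} (w : G.Walk u u), w.length ≤ n →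
    cChain w ∈ cycleSpace G := by
  intro n
  induction n with
  | zero =>
    intro u w hw
    cases w with
    | nil =>
      have : cChain (SimpleGraph.Walk.nil : G.Walk u u) = 0 := by
        funext e; simp [cChain]
      rw [this]; exact zero_mem _
    | cons h t => simp at hw
  | succ n ih =>
    intro u w hw
    cases w with
    | nil =>
      have : cChain (SimpleGraph.Walk.nil : G.Walk u u) = 0 := by
        funext e; simp [cChain]
      rw [this]; exact zero_mem _
    | @cons _ y _ hadj t =>
      by_cases hnd : t.support.Nodup
      · by_cases he : s(u, y) ∈ t.edges
        · -- the walk is u - y - u; its cChain is 0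
          obtain ⟨y', q, h', hteq, hey⟩ :=
            last_edge t (SimpleGraph.Walk.IsPath.mk' hnd) s(u, y) he (Sym2.mem_mk_left u y)
          have hyy : y' = y := by
            rw [Sym2.eq_swap] at hey
            exact Sym2.congr_left.mp hey.symm
          subst hyy
          have htp : (q.append (SimpleGraph.Walk.cons h' SimpleGraph.Walk.nil)).IsPath := by
            rw [← hteq]; exact SimpleGraph.Walk.IsPath.mk' hnd
          have hq : q = SimpleGraph.Walk.nil := isPath_loop_eq_nil q htp.of_append_left
          subst hq
          have hteq' : t = SimpleGraph.Walk.cons h' SimpleGraph.Walk.nil := by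
            simpa using hteq
          subst hteq'
          rw [cChain_backtrack hadj h']
          exact zero_mem _
        · have hcyc : (SimpleGraph.Walk.cons hadj t).IsCycle :=
            (SimpleGraph.Walk.cons_isCycle_iff t hadj).mpr ⟨SimpleGraph.Walk.IsPath.mk' hnd, he⟩
          rw [← walkChain_eq_cChain hcyc.isCircuit.isTrail.edges_nodup]
          exact Submodule.subset_span ⟨u, _, hcyc, rfl⟩
      · -- find a repeated vertex, rotate, split
        obtain ⟨x, hx2⟩ : ∃ x, 2 ≤ t.support.count x := by
          by_contra hc
          push_neg at hc
          exact hnd (List.nodup_iff_count_le_one.mpr fun a => by have := hc a; omega)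
        have hxt : x ∈ t.support := List.count_pos_iff.mp (by omega)
        have hxW : x ∈ (SimpleGraph.Walk.cons hadj t).support := by
          rw [SimpleGraph.Walk.support_cons]; exact List.mem_cons_of_mem _ hxt
        set W' := (SimpleGraph.Walk.cons hadj t).rotate x hxW with hW'
        have hperm : W'.edges.Perm (SimpleGraph.Walk.cons hadj t).edges :=
          (SimpleGraph.Walk.rotate_edges _ x hxW).perm
        have hcount : W'.support.tail.count x = t.support.count x := by
          have := SimpleGraph.Walk.support_rotate (SimpleGraph.Walk.cons hadj t) x hxW
          rw [SimpleGraph.Walk.support_cons] at this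
          simpa using this.perm.count_eq x
        have hW'nil : ¬ W'.Nil := by
          intro hnil
          have : x ∈ W'.support.tail := List.count_pos_iff.mp (by omega)
          rw [SimpleGraph.Walk.nil_iff_support_eq.mp hnil] at this
          simp at this
        obtain ⟨z, hadj2, t2, ht2⟩ := SimpleGraph.Walk.not_nil_iff.mp hW'nil
        have hxt2count : t2.support.count x = t.support.count x := by
          rw [ht2, SimpleGraph.Walk.support_cons] at hcount
          simpa using hcount
        have hxt2 : x ∈ t2.support := List.count_pos_iff.mp (by omega)
        set q := t2.takeUntil x hxt2 with hqdef
        set r := t2.dropUntil x hxt2 with hrdef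
        have hspec : q.append r = t2 := t2.take_spec hxt2
        have hcq : q.support.count x = 1 := t2.count_support_takeUntil_eq_one hxt2
        have hcr : 1 ≤ r.support.tail.count x := by
          have : t2.support = q.support ++ r.support.tail := by
            rw [← hspec, SimpleGraph.Walk.support_append]
          rw [this, List.count_append] at hxt2count
          omega
        have hrlen : 1 ≤ r.length := by
          have hmem : x ∈ r.support.tail := List.count_pos_iff.mp (by omega)
          have h1 : 1 ≤ r.support.tail.length := List.length_pos_iff.mpr (List.ne_nil_of_mem hmem)
          have h2 : r.support.length = r.length + 1 := SimpleGraph.Walk.length_support r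
          rw [List.length_tail, h2] at h1
          omega
        have hlen : t2.length + 1 = t.length + 1 := by
          have h1 : W'.edges.length = (SimpleGraph.Walk.cons hadj t).edges.length :=
            hperm.length_eq
          rw [ht2] at h1
          simpa [SimpleGraph.Walk.length_edges] using h1
        have hql : q.length + r.length = t2.length := by
          have := congrArg SimpleGraph.Walk.length hspec
          simpa [SimpleGraph.Walk.length_append] using this
        have hwl : t.length + 1 ≤ n + 1 := by simpa using hw
        have hmem1 : cChain (SimpleGraph.Walk.cons hadj2 q) ∈ cycleSpace G :=
          ih _ (by simp only [SimpleGraph.Walk.length_cons]; omega)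
        have hmem2 : cChain r ∈ cycleSpace G := ih _ (by omega)
        have heq : cChain (SimpleGraph.Walk.cons hadj t) =
            cChain (SimpleGraph.Walk.cons hadj2 q) + cChain r := by
          rw [← cChain_eq_of_perm hperm, ht2, ← hspec, ← SimpleGraph.Walk.cons_append,
            cChain_append]
        rw [heq]
        exact add_mem hmem1 hmem2

end SystolicAux
namespace SystolicAux
open SimpleGraph
variable {V : Type*} [DecidableEq V] {G : SimpleGraph V}

lemma cycle_split {v x y : V} (c : G.Walk v v) (hc : c.IsCycle) (he : s(x, y) ∈ c.edges) :
    ∃ p : G.Walk x y, s(x, y) ∉ p.edges ∧ c.edges.Perm (s(x, y) :: p.edges) := by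
  have hx : x ∈ c.support := c.fst_mem_support_of_mem_edges he
  have hcyc' : (c.rotate x hx).IsCycle := hc.rotate hx
  have hperm : (c.rotate x hx).edges.Perm c.edges := (c.rotate_edges x hx).perm
  have he' : s(x, y) ∈ (c.rotate x hx).edges := hperm.mem_iff.mpr he
  set c' := c.rotate x hx with hc'def
  clear_value c'
  clear hc'def he hx
  suffices h : ∃ p : G.Walk x y, s(x, y) ∉ p.edges ∧ c'.edges.Perm (s(x, y) :: p.edges) by
    obtain ⟨p, h1, h2⟩ := h
    exact ⟨p, h1, hperm.symm.trans h2⟩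
  clear hperm
  cases c' with
  | nil => exact absurd hcyc' SimpleGraph.Walk.IsCycle.not_of_nil
  | @cons _ z _ hadj t =>
    obtain ⟨hpath, hxz⟩ := (SimpleGraph.Walk.cons_isCycle_iff t hadj).mp hcyc'
    rw [SimpleGraph.Walk.edges_cons, List.mem_cons] at he'
    rcases he' with heq | het
    · have hzy : y = z := Sym2.congr_right.mp heq
      subst hzy
      refine ⟨t.reverse, ?_, ?_⟩
      · rw [SimpleGraph.Walk.edges_reverse, List.mem_reverse]
        rw [heq]
        exact hxz
      · rw [SimpleGraph.Walk.edges_cons, heq, SimpleGraph.Walk.edges_reverse]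
        exact List.Perm.cons _ (t.edges.reverse_perm).symm
    · have hne : s(x, y) ≠ s(x, z) := fun h => hxz (h ▸ het)
      obtain ⟨y', q, h', hteq, hey⟩ :=
        last_edge t hpath s(x, y) het (Sym2.mem_mk_left x y)
      have hyy : y = y' := by
        rw [Sym2.eq_swap] at hey
        exact Sym2.congr_left.mp hey
      subst hyy
      have htedges : t.edges = q.edges ++ [s(y, x)] := by
        rw [hteq, SimpleGraph.Walk.edges_append]
        simp
      have hnd := hcyc'.isCircuit.isTrail.edges_nodup
      rw [SimpleGraph.Walk.edges_cons, htedges] at hnd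
      have hyxq : s(y, x) ∉ q.edges := by
        have := (List.nodup_cons.mp hnd).2
        have hdisj := List.disjoint_of_nodup_append this
        intro hmem
        exact hdisj hmem (by simp)
      refine ⟨SimpleGraph.Walk.cons hadj q, ?_, ?_⟩
      · rw [SimpleGraph.Walk.edges_cons, List.mem_cons]
        rintro (h | h)
        · exact hne h
        · rw [Sym2.eq_swap] at h
          exact hyxq h
      · rw [SimpleGraph.Walk.edges_cons, htedges, SimpleGraph.Walk.edges_cons]
        refine List.Perm.trans (List.Perm.cons _ (List.perm_append_singleton _ _)) ?_
        rw [show s(x, y) = s(y, x) from Sym2.eq_swap]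
        exact List.Perm.swap _ _ _

lemma connected_deleteEdges (hconn : G.Connected) {v : V} {c : G.Walk v v} (hc : c.IsCycle)
    {e : Sym2 V} (he : e ∈ c.edges) : (G.deleteEdges {e}).Connected := by
  induction e using Sym2.ind with
  | _ x y =>
  have hr : (G.deleteEdges {s(x, y)}).Reachable x y :=
    (SimpleGraph.adj_and_reachable_delete_edges_iff_exists_cycle.mpr ⟨v, c, hc, he⟩).2
  have key : ∀ {a b : V} (_ : G.Walk a b), (G.deleteEdges {s(x, y)}).Reachable a b := by
    intro a b w
    induction w with
    | nil => exact SimpleGraph.Reachable.refl _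
    | @cons a c' b hadj t ih =>
      refine SimpleGraph.Reachable.trans ?_ ih
      by_cases hxy : s(a, c') = s(x, y)
      · rcases Sym2.eq_iff.mp hxy with ⟨rfl, rfl⟩ | ⟨rfl, rfl⟩
        · exact hr
        · exact hr.symm
      · exact (SimpleGraph.deleteEdges_adj.mpr ⟨hadj, by simpa using hxy⟩).reachable
  haveI : Nonempty V := hconn.nonempty
  constructor
  intro a b
  obtain ⟨w⟩ := hconn.preconnected a b
  exact key w

lemma card_le_of_connected [Fintype V] :
    ∀ (n : ℕ) (G : SimpleGraph V), G.edgeSet.ncard = n → G.Connected →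
      Fintype.card V ≤ G.edgeSet.ncard + 1 := by
  intro n
  induction n using Nat.strong_induction_on with
  | _ n ih =>
    intro G hn hconn
    by_cases hcyc : ∃ (v : V) (c : G.Walk v v), c.IsCycle
    · obtain ⟨v, c, hc⟩ := hcyc
      have hne : c.edges ≠ [] := by
        have h3 := hc.three_le_length
        intro h
        have := c.length_edges
        rw [h] at this
        simp at this
        omega
      obtain ⟨e, he⟩ := List.exists_mem_of_ne_nil _ hne
      have heG : e ∈ G.edgeSet := c.edges_subset_edgeSet he
      have hconn' := connected_deleteEdges hconn hc he
      have hE' : (G.deleteEdges {e}).edgeSet = G.edgeSet \ {e} := G.edgeSet_deleteEdges {e}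
      have hcard : (G.edgeSet \ {e}).ncard + 1 = G.edgeSet.ncard :=
        Set.ncard_diff_singleton_add_one heG G.edgeSet.toFinite
      have hlt : (G.deleteEdges {e}).edgeSet.ncard < n := by
        rw [hE']; omega
      have := ih _ hlt (G.deleteEdges {e}) rfl hconn'
      rw [hE'] at this
      omega
    · have hac : G.IsAcyclic := by
        intro v c hc
        exact hcyc ⟨v, c, hc⟩
      haveI : Fintype G.edgeSet := G.edgeSet.toFinite.fintype
      have hcard := (SimpleGraph.IsTree.mk hconn hac).card_edgeFinset
      have hnc : G.edgeSet.ncard = G.edgeFinset.card := by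
        rw [Set.ncard_eq_toFinset_card']; convert rfl; ext; simp
      omega

end SystolicAux
namespace SystolicAux
open SimpleGraph
variable {V : Type*} [DecidableEq V] {G : SimpleGraph V}

lemma cycleSpace_mono {G H : SimpleGraph V} (hGH : G ≤ H) : cycleSpace G ≤ cycleSpace H := by
  refine Submodule.span_le.mpr ?_
  rintro x ⟨v, w, hc, rfl⟩
  exact Submodule.subset_span
    ⟨v, w.transfer H (fun e he => SimpleGraph.edgeSet_mono hGH (w.edges_subset_edgeSet he)),
      hc.transfer _, (walkChain_transfer _ _).symm⟩

lemma cycleSpace_le_ker {e : Sym2 V} (he : e ∉ G.edgeSet) :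
    cycleSpace G ≤ LinearMap.ker
      (LinearMap.proj (R := ZMod 2) (φ := fun _ : Sym2 V => ZMod 2) e) := by
  refine Submodule.span_le.mpr ?_
  rintro x ⟨v, w, _, rfl⟩
  simp only [SetLike.mem_coe, LinearMap.mem_ker, LinearMap.proj_apply]
  rw [walkChain]
  have : e ∉ w.edges := fun hmem => he (w.edges_subset_edgeSet hmem)
  simp [this]

/-- The constant in the bound. -/
noncomputable def Cb (b : ℕ) : ℝ :=
  4 ^ (b - 1) / ((b - 1).factorial : ℝ) * ∏ k ∈ Finset.Icc 2 b, Real.logb 2 k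

lemma Cb_nonneg (b : ℕ) : 0 ≤ Cb b := by
  apply mul_nonneg
  · positivity
  · apply Finset.prod_nonneg
    intro k hk
    have hk2 : 2 ≤ k := (Finset.mem_Icc.mp hk).1
    exact Real.logb_nonneg (by norm_num) (by exact_mod_cast Nat.one_le_iff_ne_zero.mpr (by omega))

lemma Cb_zero : Cb 0 = 1 := by
  rw [Cb]
  rw [show Finset.Icc 2 0 = (∅ : Finset ℕ) from Finset.Icc_eq_empty (by omega)]
  simp

lemma Cb_one : Cb 1 = 1 := by
  rw [Cb]
  rw [show Finset.Icc 2 1 = (∅ : Finset ℕ) from Finset.Icc_eq_empty (by omega)]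
  simp

variable [Fintype V]

lemma walkLen_nonneg {ℓ : Sym2 V → ℝ} (hpos : ∀ e ∈ G.edgeSet, 0 < ℓ e) {u : V}
    (w : G.Walk u u) : 0 ≤ walkLen ℓ w :=
  Finset.sum_nonneg fun f hf =>
    (hpos f (w.edges_subset_edgeSet (List.mem_toFinset.mp hf))).le

lemma walkLen_le_tot {ℓ : Sym2 V → ℝ} (hpos : ∀ e ∈ G.edgeSet, 0 < ℓ e) {u : V}
    (w : G.Walk u u) : walkLen ℓ w ≤ ∑ e ∈ G.edgeSet.toFinite.toFinset, ℓ e := by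
  refine Finset.sum_le_sum_of_subset_of_nonneg ?_ ?_
  · intro f hf
    exact (Set.Finite.mem_toFinset _).mpr (w.edges_subset_edgeSet (List.mem_toFinset.mp hf))
  · intro f hf _
    exact (hpos f ((Set.Finite.mem_toFinset _).mp hf)).le

lemma tot_nonneg {ℓ : Sym2 V → ℝ} (hpos : ∀ e ∈ G.edgeSet, 0 < ℓ e) :
    0 ≤ ∑ e ∈ G.edgeSet.toFinite.toFinset, ℓ e :=
  Finset.sum_nonneg fun f hf => (hpos f ((Set.Finite.mem_toFinset _).mp hf)).le

lemma tot_mono {ℓ : Sym2 V → ℝ} (hpos : ∀ e ∈ G.edgeSet, 0 < ℓ e)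
    {G' : SimpleGraph V} (hle : G' ≤ G) :
    ∑ e ∈ G'.edgeSet.toFinite.toFinset, ℓ e ≤ ∑ e ∈ G.edgeSet.toFinite.toFinset, ℓ e := by
  refine Finset.sum_le_sum_of_subset_of_nonneg ?_ ?_
  · intro f hf
    exact (Set.Finite.mem_toFinset _).mpr
      (SimpleGraph.edgeSet_mono hle ((Set.Finite.mem_toFinset _).mp hf))
  · intro f hf _
    exact (hpos f ((Set.Finite.mem_toFinset _).mp hf)).le

end SystolicAux
namespace SystolicAux
open SimpleGraph

lemma step {V : Type*} [Fintype V] [DecidableEq V] (ℓ : Sym2 V → ℝ) (b : ℕ) (G : SimpleGraph V)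
    (hconn : G.Connected) (hpos : ∀ e ∈ G.edgeSet, 0 < ℓ e)
    (hbetti : G.edgeSet.ncard + 1 = Fintype.card V + (b + 1))
    {u : V} (w : G.Walk u u) (hw : w.IsCycle)
    (IH : ∀ G' : SimpleGraph V, G' ≤ G → G'.Connected →
      G'.edgeSet.ncard + 1 = Fintype.card V + b →
      ∃ (v : Fin b → V) (γ : ∀ k, G'.Walk (v k) (v k)),
        (∀ k, (γ k).IsCycle) ∧
        LinearIndependent (ZMod 2) (fun k => walkChain (γ k)) ∧
        Submodule.span (ZMod 2) (Set.range fun k => walkChain (γ k)) = cycleSpace G' ∧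
        ∏ k, walkLen ℓ (γ k) ≤ Cb b * (∑ e ∈ G'.edgeSet.toFinite.toFinset, ℓ e) ^ b) :
    ∃ (v : Fin (b + 1) → V) (γ : ∀ k, G.Walk (v k) (v k)),
      (∀ k, (γ k).IsCycle) ∧
      LinearIndependent (ZMod 2) (fun k => walkChain (γ k)) ∧
      Submodule.span (ZMod 2) (Set.range fun k => walkChain (γ k)) = cycleSpace G ∧
      ∏ k, walkLen ℓ (γ k) ≤
        walkLen ℓ w * (Cb b * (∑ e ∈ G.edgeSet.toFinite.toFinset, ℓ e) ^ b) := by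
  cases w with
  | nil => exact absurd hw SimpleGraph.Walk.IsCycle.not_of_nil
  | @cons _ z _ hadj t =>
    set W : G.Walk u u := SimpleGraph.Walk.cons hadj t with hWdef
    have he : s(u, z) ∈ W.edges := by rw [hWdef, SimpleGraph.Walk.edges_cons]; exact List.mem_cons_self
    have heG : s(u, z) ∈ G.edgeSet := (G.mem_edgeSet).mpr hadj
    set G' := G.deleteEdges {s(u, z)} with hG'def
    have hle : G' ≤ G := SimpleGraph.deleteEdges_le _
    have hconn' : G'.Connected := connected_deleteEdges hconn hw he
    have hE' : G'.edgeSet = G.edgeSet \ {s(u, z)} := G.edgeSet_deleteEdges _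
    have heG' : s(u, z) ∉ G'.edgeSet := by rw [hE']; simp
    have hbetti' : G'.edgeSet.ncard + 1 = Fintype.card V + b := by
      have h1 := Set.ncard_diff_singleton_add_one heG G.edgeSet.toFinite
      rw [hE']
      omega
    have hpos' : ∀ e ∈ G'.edgeSet, 0 < ℓ e := fun e hee => hpos e (SimpleGraph.edgeSet_mono hle hee)
    obtain ⟨v', γ', hcyc', hind', hspan', hprod'⟩ := IH G' hle hconn' hbetti'
    have hedges' : ∀ k : Fin b, ∀ f ∈ (γ' k).edges, f ∈ G.edgeSet :=
      fun k f hf => SimpleGraph.edgeSet_mono hle ((γ' k).edges_subset_edgeSet hf)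
    set γfull : ∀ k : Fin b, G.Walk (v' k) (v' k) :=
      fun k => (γ' k).transfer G (hedges' k) with hγfull
    set F : Fin (b + 1) → Σ x : V, G.Walk x x :=
      Fin.cons ⟨u, W⟩ (fun i => ⟨v' i, γfull i⟩) with hF
    have hChain : (fun k => walkChain (F k).2) =
        Fin.cons (walkChain W) (fun i => walkChain (γ' i)) := by
      funext k
      refine Fin.cases ?_ ?_ k
      · rfl
      · intro i
        exact walkChain_transfer _ _
    have hLen : (fun k => walkLen ℓ (F k).2) =
        Fin.cons (walkLen ℓ W) (fun i => walkLen ℓ (γ' i)) := by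
      funext k
      refine Fin.cases ?_ ?_ k
      · rfl
      · intro i
        exact walkLen_transfer ℓ _ _
    refine ⟨fun k => (F k).1, fun k => (F k).2, ?_, ?_, ?_, ?_⟩
    · intro k
      refine Fin.cases ?_ ?_ k
      · exact hw
      · intro i
        exact (hcyc' i).transfer _
    · rw [hChain, linearIndependent_fin_cons]
      refine ⟨hind', ?_⟩
      intro hmem
      rw [hspan'] at hmem
      have hker := cycleSpace_le_ker heG' hmem
      simp only [LinearMap.mem_ker, LinearMap.proj_apply] at hker
      rw [walkChain] at hker
      simp only [he, if_true] at hker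
      exact one_ne_zero hker
    · rw [hChain, Fin.range_cons]
      apply le_antisymm
      · refine Submodule.span_le.mpr ?_
        intro f hf
        rcases Set.mem_insert_iff.mp hf with rfl | hf'
        · exact Submodule.subset_span ⟨u, W, hw, rfl⟩
        · obtain ⟨i, rfl⟩ := hf'
          refine cycleSpace_mono hle ?_
          rw [← hspan']
          exact Submodule.subset_span (Set.mem_range_self i)
      · refine Submodule.span_le.mpr ?_
        rintro f ⟨a, c, hc, rfl⟩
        by_cases hec : s(u, z) ∈ c.edges
        · obtain ⟨pc, hpc1, hpc2⟩ := cycle_split c hc hec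
          obtain ⟨pw, hpw1, hpw2⟩ := cycle_split W hw he
          set W0 := pc.append pw.reverse with hW0
          have hW0edges : ∀ f ∈ W0.edges, f ∈ G'.edgeSet := by
            intro f hf
            rw [hE']
            rw [hW0, SimpleGraph.Walk.edges_append, List.mem_append] at hf
            refine ⟨?_, ?_⟩
            · rcases hf with hf | hf
              · exact pc.edges_subset_edgeSet hf
              · exact pw.reverse.edges_subset_edgeSet hf
            · intro hfe
              rw [Set.mem_singleton_iff] at hfe
              subst hfe
              rcases hf with hf | hf
              · exact hpc1 hf
              · rw [SimpleGraph.Walk.edges_reverse, List.mem_reverse] at hf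
                exact hpw1 hf
          have hmem0 : cChain W0 ∈ cycleSpace G' := by
            rw [← cChain_transfer W0 hW0edges]
            exact cChain_mem_cycleSpace (W0.transfer G' hW0edges).length _ le_rfl
          have hkey : walkChain c = walkChain W + cChain W0 := by
            rw [walkChain_eq_cChain hc.isCircuit.isTrail.edges_nodup,
              walkChain_eq_cChain hw.isCircuit.isTrail.edges_nodup]
            funext f
            simp only [cChain, Pi.add_apply]
            have h1 : List.count f c.edges
                = List.count f pc.edges + (if s(u, z) = f then 1 else 0) := by
              rw [hpc2.count_eq]
              simp [List.count_cons]
            have h2 : List.count f W.edges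
                = List.count f pw.edges + (if s(u, z) = f then 1 else 0) := by
              rw [hpw2.count_eq]
              simp [List.count_cons]
            have h3 : List.count f W0.edges
                = List.count f pc.edges + List.count f pw.edges := by
              rw [hW0, SimpleGraph.Walk.edges_append, List.count_append,
                SimpleGraph.Walk.edges_reverse, List.count_reverse]
            rw [h1, h2, h3]
            push_cast
            have h2z : (2 : ZMod 2) = 0 := rfl
            linear_combination (-(List.count f pw.edges : ZMod 2)) * h2z
          rw [hkey]
          refine Submodule.add_mem _ ?_ ?_
          · exact Submodule.subset_span (Set.mem_insert _ _)
          · refine Submodule.span_mono (Set.subset_insert _ _) ?_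
            rw [hspan']
            exact hmem0
        · have hcG' : ∀ f ∈ c.edges, f ∈ G'.edgeSet := by
            intro f hf
            rw [hE']
            refine ⟨c.edges_subset_edgeSet hf, ?_⟩
            intro hfe
            rw [Set.mem_singleton_iff] at hfe
            subst hfe
            exact hec hf
          rw [← walkChain_transfer c hcG']
          refine Submodule.span_mono (Set.subset_insert _ _) ?_
          rw [hspan']
          exact Submodule.subset_span ⟨a, _, hc.transfer _, rfl⟩
    · calc (∏ k, walkLen ℓ (F k).2)
          = walkLen ℓ W * ∏ i, walkLen ℓ (γ' i) := by
            rw [hLen]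
            exact Fin.prod_cons _ _
        _ ≤ walkLen ℓ W * (Cb b * (∑ e ∈ G.edgeSet.toFinite.toFinset, ℓ e) ^ b) := by
            refine mul_le_mul_of_nonneg_left ?_ (walkLen_nonneg hpos W)
            calc (∏ i, walkLen ℓ (γ' i))
                ≤ Cb b * (∑ e ∈ G'.edgeSet.toFinite.toFinset, ℓ e) ^ b := hprod'
              _ ≤ Cb b * (∑ e ∈ G.edgeSet.toFinite.toFinset, ℓ e) ^ b := by
                  refine mul_le_mul_of_nonneg_left ?_ (Cb_nonneg b)
                  exact pow_le_pow_left₀ (tot_nonneg hpos') (tot_mono hpos hle) b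

end SystolicAux
namespace SystolicAux
open SimpleGraph

lemma aux {V : Type*} [Fintype V] [DecidableEq V] (ℓ : Sym2 V → ℝ) :
    ∀ (b : ℕ) (G : SimpleGraph V), G.Connected →
      (∀ e ∈ G.edgeSet, 0 < ℓ e) →
      G.edgeSet.ncard + 1 = Fintype.card V + b →
      (∀ G' : SimpleGraph V, G' ≤ G → G'.Connected →
        ∀ b' : ℕ, 2 ≤ b' → G'.edgeSet.ncard + 1 = Fintype.card V + b' →
          ∃ (v : V) (w : G'.Walk v v), w.IsCycle ∧ walkChain w ≠ 0 ∧
            walkLen ℓ w ≤ 4 * Real.logb 2 b' / ((b' : ℝ) - 1) *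
              ∑ e ∈ G'.edgeSet.toFinite.toFinset, ℓ e) →
      ∃ (v : Fin b → V) (γ : ∀ k, G.Walk (v k) (v k)),
        (∀ k, (γ k).IsCycle) ∧
        LinearIndependent (ZMod 2) (fun k => walkChain (γ k)) ∧
        Submodule.span (ZMod 2) (Set.range fun k => walkChain (γ k)) = cycleSpace G ∧
        ∏ k, walkLen ℓ (γ k) ≤
          Cb b * (∑ e ∈ G.edgeSet.toFinite.toFinset, ℓ e) ^ b := by
  intro b
  induction b with
  | zero =>
    intro G hconn hpos hbetti _
    have hac : ∀ (x : V) (c : G.Walk x x), ¬c.IsCycle := by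
      intro x c hcyc
      have hne : c.edges ≠ [] := by
        have h3 := hcyc.three_le_length
        intro h
        have hl := c.length_edges
        rw [h] at hl
        simp at hl
        omega
      obtain ⟨e, he⟩ := List.exists_mem_of_ne_nil _ hne
      have heG : e ∈ G.edgeSet := c.edges_subset_edgeSet he
      have hconn' := connected_deleteEdges hconn hcyc he
      have hcard := card_le_of_connected _ (G.deleteEdges {e}) rfl hconn'
      rw [G.edgeSet_deleteEdges {e}] at hcard
      have h1 := Set.ncard_diff_singleton_add_one heG G.edgeSet.toFinite
      have h2 : 1 ≤ Fintype.card V := Fintype.card_pos_iff.mpr hconn.nonempty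
      omega
    have hbot : cycleSpace G = ⊥ := by
      have hset : {x : Sym2 V → ZMod 2 |
          ∃ (v : V) (w : G.Walk v v), w.IsCycle ∧ x = walkChain w} = (∅ : Set _) := by
        ext x
        simp only [Set.mem_setOf_eq, Set.mem_empty_iff_false, iff_false, not_exists]
        rintro v w ⟨hcyc, _⟩
        exact hac v w hcyc
      rw [show cycleSpace G = Submodule.span (ZMod 2) {x : Sym2 V → ZMod 2 |
          ∃ (v : V) (w : G.Walk v v), w.IsCycle ∧ x = walkChain w} from rfl,
        hset, Submodule.span_empty]
    refine ⟨Fin.elim0, fun k => k.elim0, fun k => k.elim0, linearIndependent_empty_type, ?_, ?_⟩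
    · rw [hbot, Set.range_eq_empty, Submodule.span_empty]
    · rw [Cb_zero]
      simp
  | succ b ih =>
    intro G hconn hpos hbetti hBST
    have hIH : ∀ G' : SimpleGraph V, G' ≤ G → G'.Connected →
        G'.edgeSet.ncard + 1 = Fintype.card V + b →
        ∃ (v : Fin b → V) (γ : ∀ k, G'.Walk (v k) (v k)),
          (∀ k, (γ k).IsCycle) ∧
          LinearIndependent (ZMod 2) (fun k => walkChain (γ k)) ∧
          Submodule.span (ZMod 2) (Set.range fun k => walkChain (γ k)) = cycleSpace G' ∧
          ∏ k, walkLen ℓ (γ k) ≤ Cb b * (∑ e ∈ G'.edgeSet.toFinite.toFinset, ℓ e) ^ b := by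
      intro G' hle hconn' hbetti'
      exact ih G' hconn' (fun e hee => hpos e (SimpleGraph.edgeSet_mono hle hee)) hbetti'
        (fun G'' hle'' => hBST G'' (le_trans hle'' hle))
    rcases Nat.eq_zero_or_pos b with rfl | hbpos
    · have hnotree : ¬ G.IsAcyclic := by
        intro hac
        haveI : Fintype G.edgeSet := G.edgeSet.toFinite.fintype
        have hcard := (SimpleGraph.IsTree.mk hconn hac).card_edgeFinset
        have hnc : G.edgeSet.ncard = G.edgeFinset.card := by
          rw [Set.ncard_eq_toFinset_card']; convert rfl; ext; simp
        omega
      have hex : ∃ (x : V) (c : G.Walk x x), c.IsCycle := by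
        by_contra h
        push_neg at h
        exact hnotree (by intro v c hc; exact h v c hc)
      obtain ⟨x, w, hw⟩ := hex
      obtain ⟨v, γ, h1, h2, h3, h4⟩ := step ℓ 0 G hconn hpos hbetti w hw hIH
      refine ⟨v, γ, h1, h2, h3, le_trans h4 ?_⟩
      rw [Cb_zero, Cb_one]
      simp only [pow_zero, pow_one, mul_one, one_mul, zero_add]
      exact walkLen_le_tot hpos w
    · obtain ⟨x, w, hw, _, hwlen⟩ := hBST G le_rfl hconn (b + 1) (by omega) hbetti
      obtain ⟨v, γ, h1, h2, h3, h4⟩ := step ℓ b G hconn hpos hbetti w hw hIH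
      refine ⟨v, γ, h1, h2, h3, le_trans h4 ?_⟩
      set L := ∑ e ∈ G.edgeSet.toFinite.toFinset, ℓ e with hL
      have hL0 : 0 ≤ L := tot_nonneg hpos
      have hwlen' : walkLen ℓ w ≤ 4 * Real.logb 2 ((b : ℝ) + 1) / (b : ℝ) * L := by
        refine le_trans hwlen (le_of_eq ?_)
        push_cast
        ring_nf
      have hrhs0 : 0 ≤ Cb b * L ^ b := mul_nonneg (Cb_nonneg b) (pow_nonneg hL0 b)
      calc walkLen ℓ w * (Cb b * L ^ b)
          ≤ (4 * Real.logb 2 ((b : ℝ) + 1) / (b : ℝ) * L) * (Cb b * L ^ b) :=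
            mul_le_mul_of_nonneg_right hwlen' hrhs0
        _ = Cb (b + 1) * L ^ (b + 1) := by
            obtain ⟨m, rfl⟩ : ∃ m, b = m + 1 := ⟨b - 1, by omega⟩
            have hsplit := prod_Icc_succ_top (M := ℝ) (a := 2) (b := m + 1) (by omega)
              (fun k : ℕ => Real.logb 2 k)
            have hfact : (((m + 1).factorial : ℕ) : ℝ) = ((m : ℝ) + 1) * (m.factorial : ℕ) := by
              rw [Nat.factorial_succ]
              push_cast
              ring
            simp only [Cb, Nat.add_sub_cancel]
            rw [hsplit, hfact]
            have hm1 : ((m : ℝ) + 1) ≠ 0 := by positivity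
            have hmf : ((m.factorial : ℕ) : ℝ) ≠ 0 := by
              exact_mod_cast Nat.factorial_ne_zero m
            push_cast
            field_simp
            ring
      done

end SystolicAux
theorem stmt_5 {V : Type*} [Fintype V] [DecidableEq V] (G : SimpleGraph V)
    (hconn : G.Connected)
    (ℓ : Sym2 V → ℝ) (hpos : ∀ e ∈ G.edgeSet, 0 < ℓ e)
    (b : ℕ) (hb : 2 ≤ b)
    (hbetti : G.edgeSet.ncard + 1 = Fintype.card V + b)
    (totlen : ℝ) (htot : totlen = ∑ e ∈ G.edgeSet.toFinite.toFinset, ℓ e)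
    -- the Bollobás–Szemerédi–Thomason systolic inequality, assumed for all connected
    -- subgraphs of `G` of first Betti number `b' ≥ 2`:
    (hBST : ∀ G' : SimpleGraph V, G' ≤ G → G'.Connected →
      ∀ b' : ℕ, 2 ≤ b' → G'.edgeSet.ncard + 1 = Fintype.card V + b' →
        ∃ (v : V) (w : G'.Walk v v), w.IsCycle ∧ walkChain w ≠ 0 ∧
          walkLen ℓ w ≤ 4 * Real.logb 2 b' / ((b' : ℝ) - 1) *
            ∑ e ∈ G'.edgeSet.toFinite.toFinset, ℓ e) :
    ∃ (v : Fin b → V) (γ : ∀ k, G.Walk (v k) (v k)),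
      (∀ k, (γ k).IsCycle) ∧
      LinearIndependent (ZMod 2) (fun k => walkChain (γ k)) ∧
      Submodule.span (ZMod 2) (Set.range fun k => walkChain (γ k)) = cycleSpace G ∧
      ∏ k, walkLen ℓ (γ k) ≤
        4 ^ (b - 1) / ((b - 1).factorial : ℝ) *
          (∏ k ∈ Finset.Icc 2 b, Real.logb 2 k) * totlen ^ b := by
  subst htot
  obtain ⟨v, γ, h1, h2, h3, h4⟩ := SystolicAux.aux ℓ b G hconn hpos hbetti hBST
  exact ⟨v, γ, h1, h2, h3, h4⟩
end

section
/- For every positive integer n, n! > √(2πn) · (n/e)^n · e^{1/(12n+1)}. -/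
open Stirling Real Filter Nat
open scoped Topology

lemma aux_pow (k : ℕ) : (2 * (k:ℝ) + 3) ≤ 3 ^ (k+1) := by
  induction k with
  | zero => norm_num
  | succ k ih =>
    have h3 : (3:ℝ)^(k+1+1) = 3 * 3^(k+1) := by ring
    push_cast
    push_cast at ih
    rw [h3]
    nlinarith

lemma key_diff (m : ℕ) :
    1 / (12 * ((m:ℝ)+1) + 1) - 1 / (12 * ((m:ℝ)+2) + 1) <
      Real.log (stirlingSeq (m+1)) - Real.log (stirlingSeq (m+2)) := by
  have hN : (0:ℝ) ≤ (m:ℝ) := Nat.cast_nonneg m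
  set X : ℝ := ((1 : ℝ) / (2 * ((m:ℕ)+1 : ℕ) + 1)) ^ 2 with hXdef
  have hXval : X = 1 / (2*(m:ℝ)+3)^2 := by
    rw [hXdef]; push_cast; rw [div_pow, one_pow]; ring_nf
  have hs : (0:ℝ) < (2*(m:ℝ)+3)^2 := by positivity
  have hXpos : 0 < X := by rw [hXval]; positivity
  have hX9 : X ≤ 1/9 := by
    rw [hXval]; rw [div_le_div_iff₀ hs (by norm_num)]; nlinarith
  set r : ℝ := X / 3 with hr
  have hr0 : 0 ≤ r := by positivity
  have hr1 : r < 1 := by rw [hr]; nlinarith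
  have hgeo : HasSum (fun k : ℕ => r ^ (k+1)) (r * (1 - r)⁻¹) := by
    have := (hasSum_geometric_of_lt_one hr0 hr1).mul_left r
    simp_rw [← _root_.pow_succ'] at this
    exact this
  have hD := Stirling.log_stirlingSeq_diff_hasSum m
  have hle : ∀ k : ℕ, r ^ (k+1) ≤ (1 : ℝ) / (2 * ((k:ℕ)+1 : ℕ) + 1) * X ^ (k+1) := by
    intro k
    have h1 : r ^ (k+1) = X ^ (k+1) / 3 ^ (k+1) := by rw [hr, div_pow]
    have h2 : (1 : ℝ) / (2 * ((k:ℕ)+1 : ℕ) + 1) * X ^ (k+1) = X ^ (k+1) / (2*(k:ℝ)+3) := by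
      push_cast; ring
    rw [h1, h2]
    gcongr <;> first
      | positivity
      | exact aux_pow k
  have hstrict : r ^ (1+1) < (1 : ℝ) / (2 * ((1:ℕ)+1 : ℕ) + 1) * X ^ (1+1) := by
    have hX2 : (0:ℝ) < X ^ 2 := by positivity
    rw [hr, div_pow]
    norm_num
    nlinarith
  have hlt : r * (1 - r)⁻¹ < Real.log (stirlingSeq (m+1)) - Real.log (stirlingSeq (m+2)) := by
    refine hasSum_lt (i := 1) hle hstrict hgeo ?_
    convert hD using 2
  refine lt_trans ?_ hlt
  have h3 : (0:ℝ) < 3*(2*(m:ℝ)+3)^2 - 1 := by nlinarith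
  have h1 : (0:ℝ) < 12*((m:ℝ)+1)+1 := by positivity
  have h2' : (0:ℝ) < 12*((m:ℝ)+2)+1 := by positivity
  have hX9' : 1/(2*(m:ℝ)+3)^2 ≤ 1/9 := hXval ▸ hX9
  have h6 : (0:ℝ) < 1 - 1/(2*(m:ℝ)+3)^2/3 := by linarith
  have hval : r * (1 - r)⁻¹ = 1/(3*(2*(m:ℝ)+3)^2 - 1) := by
    have hc : (26 + (m:ℝ)*36 + (m:ℝ)^2*12) ≠ 0 := by positivity
    rw [hr, hXval, ← div_eq_mul_inv, eq_div_iff h3.ne']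
    field_simp [hs.ne', h6.ne', h3.ne', hc]
  rw [hval, div_sub_div _ _ h1.ne' h2'.ne', div_lt_div_iff₀ (by positivity) h3]
  nlinarith

noncomputable def fseq (m : ℕ) : ℝ := Real.log (stirlingSeq (m+1)) - 1/(12*((m:ℝ)+1)+1)

lemma fseq_strictAnti : StrictAnti fseq := by
  apply strictAnti_nat_of_succ_lt
  intro m
  have h := key_diff m
  unfold fseq
  push_cast
  rw [show ((m:ℝ)+1+1) = (m:ℝ)+2 by ring]
  linarith

lemma fseq_tendsto : Tendsto fseq atTop (𝓝 (Real.log (Real.sqrt π))) := by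
  have hπ : (0:ℝ) < Real.sqrt π := Real.sqrt_pos.2 Real.pi_pos
  have h1 : Tendsto (fun m : ℕ => Real.log (stirlingSeq (m+1))) atTop
      (𝓝 (Real.log (Real.sqrt π))) :=
    ((Real.continuousAt_log hπ.ne').tendsto).comp
      (Stirling.tendsto_stirlingSeq_sqrt_pi.comp (tendsto_add_atTop_nat 1))
  have h2 : Tendsto (fun m : ℕ => 1/(12*((m:ℝ)+1)+1)) atTop (𝓝 0) := by
    simp_rw [one_div]
    apply Filter.Tendsto.comp tendsto_inv_atTop_zero
    apply Filter.tendsto_atTop_add_const_right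
    apply Filter.Tendsto.const_mul_atTop (by norm_num : (0:ℝ) < 12)
    exact Filter.tendsto_atTop_add_const_right _ _ tendsto_natCast_atTop_atTop
  unfold fseq
  simp_rw [one_div]
  simpa using h1.sub h2

lemma fseq_gt (m : ℕ) : Real.log (Real.sqrt π) < fseq m := by
  have h1 : Real.log (Real.sqrt π) ≤ fseq (m+1) :=
    le_of_tendsto fseq_tendsto
      (Filter.eventually_atTop.2 ⟨m+1, fun k hk => fseq_strictAnti.antitone hk⟩)
  exact lt_of_le_of_lt h1 (fseq_strictAnti (Nat.lt_succ_self m))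

theorem stmt_9 (n : ℕ) (hn : 0 < n) :
    Real.sqrt (2 * Real.pi * n) * ((n : ℝ) / Real.exp 1) ^ n *
      Real.exp (1 / (12 * (n : ℝ) + 1)) < (n.factorial : ℝ) := by
  obtain ⟨m, rfl⟩ : ∃ m, n = m + 1 := ⟨n-1, (Nat.succ_pred_eq_of_pos hn).symm⟩
  have hπ : (0:ℝ) < Real.sqrt π := Real.sqrt_pos.2 Real.pi_pos
  have hpos : 0 < stirlingSeq (m+1) := Stirling.stirlingSeq'_pos m
  have hS : Real.sqrt π * Real.exp (1/(12*((m:ℝ)+1)+1)) < stirlingSeq (m+1) := by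
    rw [← Real.exp_log hpos, ← Real.exp_log hπ, ← Real.exp_add]
    exact Real.exp_lt_exp.2 (by have := fseq_gt m; unfold fseq at this; linarith)
  set B : ℝ := Real.sqrt (2 * ((m:ℝ)+1)) * ((((m:ℕ)+1 : ℕ) : ℝ) / Real.exp 1) ^ (m+1) with hB
  have hBpos : 0 < B := by
    rw [hB]
    push_cast
    positivity
  have hfact : ((m+1)! : ℝ) = stirlingSeq (m+1) * B := by
    rw [hB, stirlingSeq]
    push_cast
    field_simp
  have hmul : (Real.sqrt π * Real.exp (1/(12*((m:ℝ)+1)+1))) * B < stirlingSeq (m+1) * B :=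
    mul_lt_mul_of_pos_right hS hBpos
  rw [← hfact] at hmul
  have hsqrt : Real.sqrt (2 * π * ((m:ℕ)+1 : ℕ)) = Real.sqrt π * Real.sqrt (2 * ((m:ℝ)+1)) := by
    rw [← Real.sqrt_mul Real.pi_pos.le]
    push_cast
    ring_nf
  calc Real.sqrt (2 * π * ((m:ℕ)+1 : ℕ)) * ((((m:ℕ)+1 : ℕ) : ℝ) / Real.exp 1) ^ (m+1) *
        Real.exp (1 / (12 * (((m:ℕ)+1 : ℕ) : ℝ) + 1))
      = (Real.sqrt π * Real.exp (1/(12*((m:ℝ)+1)+1))) * B := by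
        rw [hsqrt, hB]; push_cast; ring
    _ < ((m+1)! : ℝ) := hmul
end
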